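/- arXiv:2209.00289 — 4 statements merged into one kernel-verified Lean document; each statement's English description precedes it below -/
import Mathlib

section
/- Let G be a finite group that is a partial semidirect product of two abelian subgroups A and B, i.e., A is normal in G and G = AB. Consider the subgroup K of Sym(G) generated by the left translations by elements of A and the right translations by elements of B. Then K is abelian and acts transitively (hence regularly) on G. -/
theorem stmt_2 {G : Type*} [Group G] [Finite G] (A B : Subgroup G)
    (hA : A.Normal) (hAab : ∀ a ∈ A, ∀ a' ∈ A, a * a' = a' * a)
    (hBab : ∀ b ∈ B, ∀ b' ∈ B, b * b' = b' * b)
    (hAB : ∀ g : G, ∃ a ∈ A, ∃ b ∈ B, g = a * b) :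
    let K : Subgroup (Equiv.Perm G) :=
      Subgroup.closure ({σ | ∃ a ∈ A, σ = Equiv.mulLeft a} ∪ {σ | ∃ b ∈ B, σ = Equiv.mulRight b})
    (∀ k ∈ K, ∀ k' ∈ K, k * k' = k' * k) ∧
    (∀ g g' : G, ∃ k ∈ K, k g = g') ∧
    (∀ k ∈ K, k (1 : G) = 1 → k = 1) := by
  intro K
  have hcomm : ∀ k ∈ K, ∀ k' ∈ K, k * k' = k' * k := by
    intro k hk k' hk'
    refine Subgroup.closure_induction₂
      (p := fun x y _ _ => x * y = y * x) ?_ ?_ ?_ ?_ ?_ ?_ ?_ hk hk'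
    · rintro x y (⟨a, ha, rfl⟩ | ⟨b, hb, rfl⟩) (⟨a', ha', rfl⟩ | ⟨b', hb', rfl⟩) <;>
        ext g <;> simp [mul_assoc]
      · rw [← mul_assoc, ← mul_assoc, hAab a ha a' ha']
      · rw [hBab b' hb' b hb]
    · intro x _; rw [one_mul, mul_one]
    · intro x _; rw [one_mul, mul_one]
    · intro x y z _ _ _ h1 h2
      rw [mul_assoc, h2, ← mul_assoc, h1, mul_assoc]
    · intro y z x _ _ _ h1 h2
      rw [← mul_assoc, h1, mul_assoc, h2, ← mul_assoc]
    · intro x y _ _ h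
      exact Commute.inv_left h
    · intro x y _ _ h
      exact Commute.inv_right h
  have htrans : ∀ g g' : G, ∃ k ∈ K, k g = g' := by
    intro g g'
    obtain ⟨a₀, ha₀, b₀, hb₀, hg⟩ := hAB (g⁻¹ * g')
    refine ⟨Equiv.mulLeft (g * a₀ * g⁻¹) * Equiv.mulRight b₀, ?_, ?_⟩
    · exact Subgroup.mul_mem _
        (Subgroup.subset_closure (Or.inl ⟨_, hA.conj_mem a₀ ha₀ g, rfl⟩))
        (Subgroup.subset_closure (Or.inr ⟨_, hb₀, rfl⟩))
    · have : g * (g⁻¹ * g') = g' := by group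
      simp only [Equiv.Perm.mul_apply, Equiv.coe_mulLeft, Equiv.coe_mulRight]
      rw [← this, hg]; group
  refine ⟨hcomm, htrans, ?_⟩
  intro k hk hk1
  ext g
  obtain ⟨k', hk', hk'g⟩ := htrans 1 g
  calc k g = k (k' 1) := by rw [hk'g]
    _ = (k * k') 1 := rfl
    _ = (k' * k) 1 := by rw [hcomm k hk k' hk']
    _ = k' 1 := by simp [hk1]
    _ = g := hk'g
end

section
/- Let p be a prime, k ≥ 3, and G a nonabelian group of order p^k with p ∈ {2,3} possessing a cyclic subgroup of index p. If G is not the generalized quaternion group, then G has a normal cyclic subgroup A of order p^{k-1} and a cyclic subgroup B of order p with G = AB. -/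
open Pointwise

lemma aux_bezout {w : ℤ} (n : ℤ) (hco : IsCoprime n w) (m : ℤ) :
    ∃ t : ℤ, n ∣ t * w + m := by
  obtain ⟨c, e, hce⟩ := hco
  refine ⟨-(m * e), ⟨m * c, ?_⟩⟩
  have h : -(m * e) * w + m = m * (c * n + e * w) - m * e * w := by rw [hce]; ring
  rw [h]; ring

lemma aux_coprime_pow {q : ℕ} (hq : Prime (q : ℤ)) {w : ℤ} (hw : ¬ (q:ℤ) ∣ w) (j : ℕ) :
    IsCoprime ((q:ℤ)^j) w :=
  IsCoprime.pow_left (hq.coprime_iff_not_dvd.mpr hw)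

lemma nt3 {k : ℕ} (hk : 3 ≤ k) {r m : ℤ}
    (hd : (3^(k-1) : ℤ) ∣ (r-1) * (r*r + r + 1))
    (hnd : ¬ (3^(k-1) : ℤ) ∣ (r-1))
    (hm : (3^(k-1) : ℤ) ∣ m * (r-1)) :
    ∃ t : ℤ, (3^(k-1) : ℤ) ∣ t * (r*r + r + 1) + m := by
  obtain ⟨j, rfl⟩ : ∃ j, k = 3 + j := ⟨k - 3, by omega⟩
  have e1 : 3 + j - 1 = j + 2 := by omega
  rw [e1] at hd hnd hm ⊢
  have h3 : Prime (3 : ℤ) := Int.prime_three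
  set d : ℤ := r - 1 with hdd
  have hS : r*r + r + 1 = d^2 + 3*d + 3 := by rw [hdd]; ring
  rw [hS] at hd ⊢
  have h3d : (3:ℤ) ∣ d := by
    by_contra h3d
    have h1 : (3:ℤ) ∣ d * (d^2 + 3*d + 3) :=
      dvd_trans (dvd_pow_self 3 (by omega : j+2 ≠ 0)) hd
    rcases h3.dvd_mul.mp h1 with h | h
    · exact h3d h
    · have h2 : (3:ℤ) ∣ d^2 := by
        have h' := dvd_sub h (dvd_mul_right 3 (d+1))
        have e : d^2+3*d+3 - 3*(d+1) = d^2 := by ring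
        rwa [e] at h'
      exact h3d (h3.dvd_of_dvd_pow h2)
  obtain ⟨d1, hd1⟩ := h3d
  set w : ℤ := 3*d1^2 + 3*d1 + 1 with hw
  have hSw : d^2 + 3*d + 3 = 3 * w := by rw [hd1, hw]; ring
  have h3w : ¬ (3:ℤ) ∣ w := by
    intro h
    have h' := dvd_sub h (dvd_mul_right 3 (d1^2 + d1))
    rw [show 3*d1^2+3*d1+1 - 3*(d1^2+d1) = 1 by ring] at h'
    norm_num at h'
  have hj : (3:ℤ)^j ∣ d1 * w := by
    have h1 : (3:ℤ)^j * 9 ∣ (3*d1) * (3*w) := by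
      rw [show (3:ℤ)^j * 9 = 3^(j+2) by ring, ← hd1, ← hSw]; exact hd
    rw [show (3*d1) * (3*w) = (d1 * w) * 9 by ring] at h1
    exact (mul_dvd_mul_iff_right (by norm_num : (9:ℤ) ≠ 0)).mp h1
  have hjd1 : (3:ℤ)^j ∣ d1 := (aux_coprime_pow h3 h3w j).dvd_of_dvd_mul_right hj
  obtain ⟨u, hu⟩ := hjd1
  have hdu : d = 3^(j+1) * u := by rw [hd1, hu]; ring
  have h3u : ¬ (3:ℤ) ∣ u := by
    rintro ⟨u', hu'⟩
    exact hnd ⟨u', by rw [hdu, hu']; ring⟩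
  have h3m : (3:ℤ) ∣ m := by
    have h1 : (3:ℤ) * 3^(j+1) ∣ (m * u) * 3^(j+1) := by
      rw [show ((3:ℤ) * 3^(j+1)) = 3^(j+2) by ring,
        show (m*u) * 3^(j+1) = m * (3^(j+1) * u) by ring, ← hdu]
      exact hm
    rw [mul_comm (3:ℤ) (3^(j+1)), mul_comm (m*u) ((3:ℤ)^(j+1))] at h1
    have h2 := (mul_dvd_mul_iff_left (pow_ne_zero (j+1) (by norm_num : (3:ℤ) ≠ 0))).mp h1
    rcases h3.dvd_mul.mp h2 with h | h
    · exact h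
    · exact absurd h h3u
  obtain ⟨m1, hm1⟩ := h3m
  obtain ⟨t, ht⟩ := aux_bezout ((3:ℤ)^(j+1)) (aux_coprime_pow h3 h3w (j+1)) m1
  refine ⟨t, ?_⟩
  rw [hSw, hm1, show t * (3*w) + 3*m1 = 3 * (t*w + m1) by ring,
    show (3:ℤ)^(j+2) = 3 * 3^(j+1) by ring]
  exact mul_dvd_mul_left 3 ht

lemma nt2 {k : ℕ} (hk : 3 ≤ k) {r m : ℤ}
    (hd : (2^(k-1) : ℤ) ∣ (r-1) * (r+1))
    (hnd : ¬ (2^(k-1) : ℤ) ∣ (r-1))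
    (hm : (2^(k-1) : ℤ) ∣ m * (r-1)) :
    (∃ t : ℤ, (2^(k-1):ℤ) ∣ t * (1 + r) + m) ∨
      ((2^(k-1):ℤ) ∣ (r+1) ∧ (2^(k-1):ℤ) ∣ (m - 2^(k-2))) := by
  obtain ⟨j, rfl⟩ : ∃ j, k = 3 + j := ⟨k - 3, by omega⟩
  have e1 : 3 + j - 1 = j + 2 := by omega
  have e2 : 3 + j - 2 = j + 1 := by omega
  rw [e1] at hd hnd hm
  rw [e1, e2]
  have h2 : Prime (2 : ℤ) := Int.prime_two
  have hro : Odd r := by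
    rcases Int.even_or_odd r with he | ho
    · exfalso
      obtain ⟨c, hcc⟩ := he
      have h1 : (2:ℤ) ∣ (r-1)*(r+1) :=
        dvd_trans (dvd_pow_self 2 (by omega : j+2 ≠ 0)) hd
      obtain ⟨q, hq⟩ := h1
      rw [hcc] at hq
      have e : 4*(c*c) - 1 = 2 * q := by linear_combination hq
      set cc := c * c
      omega
    · exact ho
  obtain ⟨c, hc⟩ := hro
  by_cases hre : (2:ℤ)^(j+2) ∣ (r+1)
  · have h2m : (2:ℤ)^(j+2) ∣ 2 * m := by
      rw [show 2*m = m*(r+1) - m*(r-1) by ring]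
      exact dvd_sub (Dvd.dvd.mul_left hre m) hm
    have hm2 : (2:ℤ)^(j+1) ∣ m := by
      rw [show (2:ℤ)^(j+2) = 2 * 2^(j+1) by ring] at h2m
      exact (mul_dvd_mul_iff_left (by norm_num : (2:ℤ) ≠ 0)).mp h2m
    obtain ⟨v, hv⟩ := hm2
    rcases Int.even_or_odd v with hve | hvo
    · obtain ⟨v', hv'⟩ := hve
      exact Or.inl ⟨0, ⟨v', by rw [hv, hv']; ring⟩⟩
    · obtain ⟨v', hv'⟩ := hvo
      exact Or.inr ⟨hre, ⟨v', by rw [hv, hv']; ring⟩⟩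
  · left
    have hcc : (2:ℤ)^j ∣ c * (c+1) := by
      have h1 : (2:ℤ)^j * 4 ∣ (c*(c+1)) * 4 := by
        rw [show (2:ℤ)^j * 4 = 2^(j+2) by ring, show (c*(c+1))*4 = (r-1)*(r+1) by rw [hc]; ring]
        exact hd
      exact (mul_dvd_mul_iff_right (by norm_num : (4:ℤ) ≠ 0)).mp h1
    rcases Int.even_or_odd c with hce | hco
    · -- c even, c+1 odd
      have hcodd : ¬ (2:ℤ) ∣ (c+1) := by
        obtain ⟨c0, h0⟩ := hce
        rintro ⟨q, hq⟩; omega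
      have hjc : (2:ℤ)^j ∣ c := (aux_coprime_pow h2 hcodd j).dvd_of_dvd_mul_right hcc
      obtain ⟨u, hu⟩ := hjc
      have hdu : r - 1 = 2^(j+1) * u := by rw [hc, hu]; ring
      have huo : ¬ (2:ℤ) ∣ u := by
        rintro ⟨u', hu'⟩
        exact hnd ⟨u', by rw [hdu, hu']; ring⟩
      have hmo : (2:ℤ) ∣ m := by
        have h1 : (2:ℤ)^(j+1) * 2 ∣ (m * u) * 2^(j+1) := by
          rw [show ((2:ℤ)^(j+1) * 2) = 2^(j+2) by ring,
            show (m*u) * 2^(j+1) = m * (2^(j+1) * u) by ring, ← hdu]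
          exact hm
        rw [mul_comm (m*u) ((2:ℤ)^(j+1))] at h1
        have h2' := (mul_dvd_mul_iff_left (pow_ne_zero (j+1) (by norm_num : (2:ℤ) ≠ 0))).mp h1
        rcases h2.dvd_mul.mp h2' with h | h
        · exact h
        · exact absurd h huo
      obtain ⟨m1, hm1⟩ := hmo
      obtain ⟨t, ht⟩ := aux_bezout ((2:ℤ)^(j+1)) (aux_coprime_pow h2 hcodd (j+1)) m1
      refine ⟨t, ?_⟩
      rw [show t * (1 + r) + m = t * (1 + (2*c+1)) + 2*m1 by rw [← hc, ← hm1],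
        show t * (1 + (2*c+1)) + 2*m1 = 2 * (t*(c+1) + m1) by ring,
        show (2:ℤ)^(j+2) = 2 * 2^(j+1) by ring]
      exact mul_dvd_mul_left 2 ht
    · -- c odd
      have hcodd : ¬ (2:ℤ) ∣ c := by
        obtain ⟨c0, h0⟩ := hco
        rintro ⟨q, hq⟩; omega
      have hjc : (2:ℤ)^j ∣ (c+1) := by
        rw [mul_comm] at hcc
        exact (aux_coprime_pow h2 hcodd j).dvd_of_dvd_mul_right hcc
      obtain ⟨u, hu⟩ := hjc
      have heu : r + 1 = 2^(j+1) * u := by rw [hc, show (2*c+1)+1 = 2*(c+1) by ring, hu]; ring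
      have huo : ¬ (2:ℤ) ∣ u := by
        rintro ⟨u', hu'⟩
        exact hre ⟨u', by rw [heu, hu']; ring⟩
      have hm2 : (2:ℤ)^(j+1) ∣ m := by
        have h1 : (2:ℤ)^(j+1) * 2 ∣ (m * c) * 2 := by
          rw [show ((2:ℤ)^(j+1) * 2) = 2^(j+2) by ring,
            show (m*c) * 2 = m * (2*c) by ring, show (2:ℤ)*c = r - 1 by rw [hc]; ring]
          exact hm
        have h2' := (mul_dvd_mul_iff_right (by norm_num : (2:ℤ) ≠ 0)).mp h1
        exact (aux_coprime_pow h2 hcodd (j+1)).dvd_of_dvd_mul_right h2'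
      obtain ⟨m2, hm2'⟩ := hm2
      rcases Int.even_or_odd u with hue | huo'
      · exact absurd (by obtain ⟨w', hw'⟩ := hue; exact ⟨w', by rw [hw']; ring⟩) huo
      · obtain ⟨w, hw⟩ := huo'
        refine ⟨m2, ⟨m2 * (w+1), ?_⟩⟩
        rw [show (1:ℤ) + r = r + 1 by ring, heu, hm2', hw]; ring

lemma aux_coatom {G : Type*} [Group G] {A : Subgroup G} {p : ℕ} (hp : p.Prime)
    (hA : A.index = p) : IsCoatom A := by
  constructor
  · intro h
    rw [h, Subgroup.index_top] at hA
    exact hp.one_lt.ne' hA.symm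
  · intro K hK
    rcases hp.eq_one_or_self_of_dvd K.index (hA ▸ Subgroup.index_dvd_of_le hK.le) with h1 | h1
    · exact Subgroup.index_eq_one.mp h1
    · exfalso
      have h2 := Subgroup.relIndex_mul_index hK.le
      rw [hA, h1] at h2
      have h3 : A.relIndex K = 1 :=
        Nat.eq_of_mul_eq_mul_right hp.pos (h2.trans (one_mul p).symm)
      exact hK.not_ge (Subgroup.relIndex_eq_one.mp h3)

lemma aux_finish {G : Type*} [Group G] [Fintype G] {p n : ℕ} (hp : p.Prime)
    {A : Subgroup G} (hnorm : A.Normal) (hAmax : IsCoatom A) (hAcyc : IsCyclic A)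
    (hAcard : Nat.card A = n) {b : G} (hbA : b ∉ A) (hbp : b ^ p = 1) :
    ∃ A' B : Subgroup G, A'.Normal ∧ IsCyclic A' ∧ Nat.card A' = n ∧
      IsCyclic B ∧ Nat.card B = p ∧ ∀ g : G, ∃ a ∈ A', ∃ b' ∈ B, g = a * b' := by
  haveI : Fact p.Prime := ⟨hp⟩
  haveI := hnorm
  have hb1 : b ≠ 1 := fun h => hbA (h ▸ A.one_mem)
  have hob : orderOf b = p := orderOf_eq_prime hbp hb1
  have hBcyc : IsCyclic (Subgroup.zpowers b) := by
    constructor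
    refine ⟨⟨b, Subgroup.mem_zpowers b⟩, ?_⟩
    rintro ⟨g, hg⟩
    obtain ⟨z, hz⟩ := Subgroup.mem_zpowers_iff.mp hg
    exact Subgroup.mem_zpowers_iff.mpr ⟨z, Subtype.ext (by simpa using hz)⟩
  have htop : A ⊔ Subgroup.zpowers b = ⊤ := by
    apply hAmax.2
    refine lt_of_le_of_ne le_sup_left (fun h => hbA ?_)
    rw [h]
    exact Subgroup.mem_sup_right (Subgroup.mem_zpowers b)
  refine ⟨A, Subgroup.zpowers b, hnorm, hAcyc, hAcard, hBcyc, by rw [Nat.card_zpowers, hob], ?_⟩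
  intro g
  have hg : g ∈ (A : Set G) * (Subgroup.zpowers b : Set G) := by
    rw [← Subgroup.normal_mul, htop]
    trivial
  obtain ⟨a', ha', b', hb', hab⟩ := hg
  exact ⟨a', ha', b', hb', hab.symm⟩

lemma aux_quat {G : Type*} [Group G] [Fintype G] {k : ℕ} (hk : 3 ≤ k)
    (hcard : Fintype.card G = 2 ^ k) {aa x : G}
    (horder : orderOf aa = 2 ^ (k-1))
    (hx : x ∉ Subgroup.zpowers aa)
    (hswap : ∀ z : ℤ, x * aa ^ z = aa ^ (-z) * x)
    (hx2 : x ^ 2 = aa ^ ((2:ℤ) ^ (k-2))) :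
    Nonempty (G ≃* QuaternionGroup (2 ^ (k - 2))) := by
  set nq : ℕ := 2 ^ (k-2) with hnq
  haveI : NeZero nq := ⟨by positivity⟩
  haveI : NeZero (2 * nq) := ⟨by positivity⟩
  have hN : 2 ^ (k-1) = 2 * nq := by
    rw [hnq, show k - 1 = k - 2 + 1 by omega, pow_succ]; ring
  have hnqz : ((nq : ℕ) : ℤ) = (2:ℤ) ^ (k-2) := by rw [hnq]; push_cast; ring
  have hcast : ((2 * nq : ℕ) : ℤ) = (2:ℤ) ^ (k-1) := by
    rw [← hN]; push_cast; ring
  have hdvd1 : ∀ z : ℤ, aa ^ z = 1 ↔ ((2:ℤ) ^ (k-1)) ∣ z := by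
    intro z
    rw [← orderOf_dvd_iff_zpow_eq_one, horder, Nat.cast_pow]
    norm_num
  have hzeq : ∀ u v : ℤ, ((2:ℤ) ^ (k-1)) ∣ u - v → aa ^ u = aa ^ v := by
    intro u v h
    have h1 : aa ^ (u - v) = 1 := (hdvd1 _).mpr h
    calc aa ^ u = aa ^ (u - v + v) := by congr 1; ring
      _ = aa ^ (u - v) * aa ^ v := zpow_add aa _ _
      _ = aa ^ v := by rw [h1, one_mul]
  have hval : ∀ z : ℤ, aa ^ (((z : ZMod (2*nq)).val : ℤ)) = aa ^ z := by
    intro z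
    apply hzeq
    rw [ZMod.val_intCast, Int.emod_def, ← hcast]
    exact ⟨-(z / ((2*nq : ℕ) : ℤ)), by ring⟩
  let f : QuaternionGroup nq → G := fun q =>
    match q with
    | QuaternionGroup.a i => aa ^ (i.val : ℤ)
    | QuaternionGroup.xa i => x * aa ^ (i.val : ℤ)
  have hfa : ∀ i, f (QuaternionGroup.a i) = aa ^ (i.val : ℤ) := fun i => rfl
  have hfxa : ∀ i, f (QuaternionGroup.xa i) = x * aa ^ (i.val : ℤ) := fun i => rfl
  have hmul : ∀ q r : QuaternionGroup nq, f (q * r) = f q * f r := by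
    rintro (i | i) (j | j) <;>
      obtain ⟨zi, rfl⟩ := ZMod.intCast_surjective i <;>
      obtain ⟨zj, rfl⟩ := ZMod.intCast_surjective j
    · have hc : ((zi : ZMod (2*nq)) + (zj : ZMod (2*nq))) = ((zi + zj : ℤ) : ZMod (2*nq)) := by
        push_cast; ring
      rw [QuaternionGroup.a_mul_a, hc, hfa, hfa, hfa, hval, hval, hval]
      exact zpow_add aa zi zj
    · have hc : ((zj : ZMod (2*nq)) - (zi : ZMod (2*nq))) = ((zj - zi : ℤ) : ZMod (2*nq)) := by
        push_cast; ring
      rw [QuaternionGroup.a_mul_xa, hc, hfxa, hfa, hfxa, hval, hval, hval]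
      rw [show zj - zi = -zi + zj by ring, zpow_add, ← mul_assoc, hswap (-zi), neg_neg, mul_assoc]
    · have hc : ((zi : ZMod (2*nq)) + (zj : ZMod (2*nq))) = ((zi + zj : ℤ) : ZMod (2*nq)) := by
        push_cast; ring
      rw [QuaternionGroup.xa_mul_a, hc, hfxa, hfxa, hfa, hval, hval, hval]
      rw [zpow_add aa zi zj, mul_assoc]
    · have hc : ((nq : ZMod (2*nq)) + (zj : ZMod (2*nq)) - (zi : ZMod (2*nq)))
          = (((nq : ℤ) + zj - zi : ℤ) : ZMod (2*nq)) := by push_cast; ring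
      rw [QuaternionGroup.xa_mul_xa, hc, hfa, hfxa, hfxa, hval, hval, hval]
      have hsw' : aa ^ zi * x = x * aa ^ (-zi) := by rw [hswap (-zi), neg_neg]
      calc aa ^ ((nq : ℤ) + zj - zi)
          = aa ^ ((2:ℤ) ^ (k-2)) * aa ^ (-zi) * aa ^ zj := by
            rw [← zpow_add, ← zpow_add]; congr 1; rw [hnqz]; ring
        _ = x ^ 2 * aa ^ (-zi) * aa ^ zj := by rw [hx2]
        _ = x * aa ^ zi * (x * aa ^ zj) := by
            rw [pow_two, mul_assoc x x (aa ^ (-zi)), ← hsw', ← mul_assoc x (aa ^ zi) x,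
              mul_assoc (x * aa ^ zi) x (aa ^ zj)]
  let φ : QuaternionGroup nq →* G := MonoidHom.mk' f hmul
  have hinj : Function.Injective φ := by
    rw [injective_iff_map_eq_one]
    rintro (i | i) h
    · have h1 : aa ^ (i.val : ℤ) = 1 := h
      have h2 : ((2 * nq : ℕ) : ℤ) ∣ (i.val : ℤ) := by
        rw [hcast]; exact (hdvd1 _).mp h1
      have h3 : 2 * nq ∣ i.val := Int.natCast_dvd_natCast.mp h2
      have h4 : i.val = 0 := Nat.eq_zero_of_dvd_of_lt h3 (ZMod.val_lt i) |>.symm ▸ rfl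
      have h5 : i = 0 := (ZMod.val_eq_zero i).mp h4
      rw [h5, QuaternionGroup.one_def]
    · exfalso
      have h1 : x * aa ^ (i.val : ℤ) = 1 := h
      have h2 : x = aa ^ (-(i.val : ℤ)) := by
        rw [zpow_neg]
        exact eq_inv_of_mul_eq_one_left h1
      exact hx (Subgroup.mem_zpowers_iff.mpr ⟨-(i.val : ℤ), h2.symm⟩)
  have hcards : Fintype.card (QuaternionGroup nq) = Fintype.card G := by
    have h4 : 2 ^ k = 4 * nq := by
      rw [hnq, show (4:ℕ) = 2 ^ 2 from rfl, ← pow_add]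
      congr 1
      omega
    rw [QuaternionGroup.card, hcard, h4]
  have hbij : Function.Bijective φ := (Fintype.bijective_iff_injective_and_card φ).mpr ⟨hinj, hcards⟩
  exact ⟨(MulEquiv.ofBijective φ hbij).symm⟩

theorem stmt_5 {p k : ℕ} (hp : p.Prime) (hk : 3 ≤ k) (hp23 : p = 2 ∨ p = 3)
    {G : Type*} [Group G] [Fintype G] (hcard : Fintype.card G = p ^ k)
    (hnab : ¬ ∀ x y : G, x * y = y * x)
    (hC : ∃ C : Subgroup G, IsCyclic C ∧ C.index = p)
    (hQ : ¬ Nonempty (G ≃* QuaternionGroup (2 ^ (k - 2)))) :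
    ∃ A B : Subgroup G, A.Normal ∧ IsCyclic A ∧ Nat.card A = p ^ (k - 1) ∧
      IsCyclic B ∧ Nat.card B = p ∧ ∀ g : G, ∃ a ∈ A, ∃ b ∈ B, g = a * b := by
  obtain ⟨A, hAcyc, hAidx⟩ := hC
  haveI hfact : Fact p.Prime := ⟨hp⟩
  have hcardG : Nat.card G = p ^ k := by rw [Nat.card_eq_fintype_card, hcard]
  have hA_card : Nat.card A = p ^ (k-1) := by
    have h := Subgroup.card_mul_index A
    rw [hAidx, hcardG, show p ^ k = p ^ (k-1) * p by
      rw [← pow_succ]; congr 1; omega] at h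
    exact Nat.eq_of_mul_eq_mul_right hp.pos h
  have hAmax : IsCoatom A := aux_coatom hp hAidx
  have hpG : IsPGroup p G := IsPGroup.of_card hcardG
  haveI hnil : Group.IsNilpotent G := hpG.isNilpotent
  have hAnormal : A.Normal :=
    Subgroup.NormalizerCondition.normal_of_coatom A (normalizerCondition_of_isNilpotent (G := G)) hAmax
  haveI := hAnormal
  obtain ⟨gen, hgen⟩ := hAcyc.exists_generator
  set aa : G := (gen : G) with haa
  have haamem : aa ∈ A := gen.2
  have hA_eq : Subgroup.zpowers aa = A := by
    apply le_antisymm (Subgroup.zpowers_le.mpr haamem)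
    intro g hg
    obtain ⟨z, hz⟩ := Subgroup.mem_zpowers_iff.mp (hgen ⟨g, hg⟩)
    exact Subgroup.mem_zpowers_iff.mpr ⟨z, by simpa [haa] using congrArg Subtype.val hz⟩
  have horder : orderOf aa = p ^ (k-1) := by rw [← Nat.card_zpowers, hA_eq, hA_card]
  obtain ⟨x, hx⟩ : ∃ x : G, x ∉ A := by
    by_contra h
    push_neg at h
    exact hAmax.1 ((Subgroup.eq_top_iff' A).mpr h)
  haveI hfi : A.FiniteIndex := ⟨by rw [hAidx]; exact hp.ne_zero⟩
  have hxp : x ^ p ∈ A := by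
    have := A.pow_index_mem x
    rwa [hAidx] at this
  obtain ⟨rr, hrr⟩ : ∃ z : ℤ, aa ^ z = x * aa * x⁻¹ := by
    have hmem : x * aa * x⁻¹ ∈ A := hAnormal.conj_mem aa haamem x
    rw [← hA_eq] at hmem
    exact Subgroup.mem_zpowers_iff.mp hmem
  obtain ⟨mm, hmm⟩ : ∃ z : ℤ, aa ^ z = x ^ p := by
    rw [← hA_eq] at hxp
    exact Subgroup.mem_zpowers_iff.mp hxp
  have hdvd1 : ∀ z : ℤ, aa ^ z = 1 ↔ ((p:ℤ) ^ (k-1)) ∣ z := by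
    intro z
    rw [← orderOf_dvd_iff_zpow_eq_one, horder, Nat.cast_pow]
  have hconjz : ∀ z : ℤ, x * aa ^ z * x⁻¹ = aa ^ (rr * z) := by
    intro z
    rw [zpow_mul, hrr, conj_zpow]
  have hswap : ∀ z : ℤ, x * aa ^ z = aa ^ (rr * z) * x := by
    intro z
    calc x * aa ^ z = x * aa ^ z * x⁻¹ * x := by group
      _ = aa ^ (rr * z) * x := by rw [hconjz z]
  have h2 : aa ^ (rr * mm) = aa ^ mm := by
    have h1 := hconjz mm
    rw [hmm] at h1
    have h3 : x * x ^ p * x⁻¹ = x ^ p := by group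
    rw [h3] at h1
    rw [← h1, hmm]
  have hmd : ((p:ℤ) ^ (k-1)) ∣ mm * (rr - 1) := by
    have h4 : aa ^ (rr * mm - mm) = 1 := by
      rw [zpow_sub, h2, mul_inv_cancel]
    have h5 := (hdvd1 _).mp h4
    rwa [show rr * mm - mm = mm * (rr - 1) by ring] at h5
  have habel : ¬ ((p:ℤ) ^ (k-1)) ∣ (rr - 1) := by
    intro hdv
    apply hnab
    have hxa : x * aa = aa * x := by
      have h1 : aa ^ (rr - 1) = 1 := (hdvd1 _).mpr hdv
      have h2' : aa ^ rr = aa := by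
        rw [show rr = rr - 1 + 1 by ring, zpow_add, h1, one_mul, zpow_one]
      have h3 := hrr
      rw [h2'] at h3
      calc x * aa = x * aa * x⁻¹ * x := by group
        _ = aa * x := by rw [← h3]
    have hcent : ∀ c : G, aa * c = c * aa → x * c = c * x → ∀ g : G, c * g = g * c := by
      intro c h1 h2' g
      have hle : A ⊔ Subgroup.zpowers x ≤ Subgroup.centralizer {c} := by
        apply sup_le
        · rw [← hA_eq, Subgroup.zpowers_le]
          exact Subgroup.mem_centralizer_iff.mpr (by
            rintro y hy
            rw [Set.mem_singleton_iff] at hy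
            subst hy
            exact h1.symm)
        · rw [Subgroup.zpowers_le]
          exact Subgroup.mem_centralizer_iff.mpr (by
            rintro y hy
            rw [Set.mem_singleton_iff] at hy
            subst hy
            exact h2'.symm)
      have htop : A ⊔ Subgroup.zpowers x = ⊤ := by
        apply hAmax.2
        refine lt_of_le_of_ne le_sup_left (fun h => hx ?_)
        rw [h]
        exact Subgroup.mem_sup_right (Subgroup.mem_zpowers x)
      have hg : g ∈ Subgroup.centralizer {c} := hle (htop ▸ Subgroup.mem_top g)
      exact Subgroup.mem_centralizer_iff.mp hg c rfl
    have haag : ∀ g : G, aa * g = g * aa := hcent aa rfl hxa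
    have hxg : ∀ g : G, x * g = g * x := hcent x hxa.symm rfl
    intro g h
    exact hcent g (haag g) (hxg g) h
  rcases hp23 with rfl | rfl
  · -- p = 2
    have hr2 : aa ^ (rr * rr) = aa := by
      have e1 := hconjz rr
      rw [hrr] at e1
      have e2 : x * (x * aa * x⁻¹) * x⁻¹ = x ^ 2 * aa * (x ^ 2)⁻¹ := by
        rw [pow_two, mul_inv_rev]
        simp [mul_assoc]
      rw [e2, ← hmm] at e1
      have e3 : aa ^ mm * aa * (aa ^ mm)⁻¹ = aa := by group
      rw [e3] at e1
      exact e1.symm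
    have hdvd_r : ((2:ℤ) ^ (k-1)) ∣ (rr - 1) * (rr + 1) := by
      have h4 : aa ^ (rr * rr - 1) = 1 := by
        rw [zpow_sub, hr2, zpow_one, mul_inv_cancel]
      have h5 := (hdvd1 _).mp h4
      push_cast at h5 ⊢
      rwa [show rr * rr - 1 = (rr - 1) * (rr + 1) by ring] at h5
    have habel2 : ¬ ((2:ℤ) ^ (k-1)) ∣ (rr - 1) := by push_cast at habel; exact habel
    have hmd2 : ((2:ℤ) ^ (k-1)) ∣ mm * (rr - 1) := by push_cast at hmd; exact hmd
    rcases nt2 hk hdvd_r habel2 hmd2 with ⟨t, ht⟩ | ⟨hre, hme⟩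
    · have hb2 : (aa ^ t * x) ^ 2 = aa ^ (t + rr * t + mm) := by
        calc (aa ^ t * x) ^ 2 = aa ^ t * (x * aa ^ t) * x := by
              rw [pow_two]; simp [mul_assoc]
          _ = aa ^ t * (aa ^ (rr * t) * x) * x := by rw [hswap t]
          _ = aa ^ t * aa ^ (rr * t) * x ^ 2 := by
              rw [pow_two]; simp [mul_assoc]
          _ = aa ^ t * aa ^ (rr * t) * aa ^ mm := by rw [← hmm]
          _ = _ := by rw [← zpow_add, ← zpow_add]
      have hb1 : (aa ^ t * x) ^ 2 = 1 := by
        rw [hb2]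
        apply (hdvd1 _).mpr
        push_cast
        rwa [show t + rr * t + mm = t * (1 + rr) + mm by ring]
      have hbA : aa ^ t * x ∉ A := by
        intro hb
        apply hx
        have : x = (aa ^ t)⁻¹ * (aa ^ t * x) := by group
        rw [this]
        exact A.mul_mem (A.inv_mem (A.zpow_mem haamem t)) hb
      exact aux_finish hp hAnormal hAmax hAcyc hA_card hbA hb1
    · -- quaternion case
      exfalso
      apply hQ
      have hzeq : ∀ u v : ℤ, ((2:ℤ) ^ (k-1)) ∣ u - v → aa ^ u = aa ^ v := by
        intro u v h
        have h1 : aa ^ (u - v) = 1 := (hdvd1 _).mpr (by push_cast; exact h)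
        calc aa ^ u = aa ^ (u - v + v) := by congr 1; ring
          _ = aa ^ (u - v) * aa ^ v := zpow_add aa _ _
          _ = aa ^ v := by rw [h1, one_mul]
      have hswap' : ∀ z : ℤ, x * aa ^ z = aa ^ (-z) * x := by
        intro z
        rw [hswap z]
        congr 1
        apply hzeq
        rw [show rr * z - -z = (rr + 1) * z by ring]
        exact hre.mul_right z
      have hx2 : x ^ 2 = aa ^ ((2:ℤ) ^ (k-2)) := by
        rw [← hmm]
        exact hzeq mm _ hme
      have hxz : x ∉ Subgroup.zpowers aa := by rw [hA_eq]; exact hx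
      have horder2 : orderOf aa = 2 ^ (k-1) := horder
      exact aux_quat hk hcard horder2 hxz hswap' hx2
  · -- p = 3
    have hr3 : aa ^ (rr * (rr * rr)) = aa := by
      have e : x ^ 3 * aa * (x ^ 3)⁻¹ = aa ^ (rr * (rr * rr)) := by
        have e0 : x ^ 3 * aa * (x ^ 3)⁻¹ = x * (x * (x * aa * x⁻¹) * x⁻¹) * x⁻¹ := by
          rw [pow_succ, pow_two, mul_inv_rev, mul_inv_rev]
          simp [mul_assoc]
        rw [e0, ← hrr, hconjz rr, hconjz (rr * rr)]
      have e2 : x ^ 3 * aa * (x ^ 3)⁻¹ = aa := by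
        rw [← hmm]
        group
      rw [← e, e2]
    have hdvd_r : ((3:ℤ) ^ (k-1)) ∣ (rr - 1) * (rr * rr + rr + 1) := by
      have h4 : aa ^ (rr * (rr * rr) - 1) = 1 := by
        rw [zpow_sub, hr3, zpow_one, mul_inv_cancel]
      have h5 := (hdvd1 _).mp h4
      push_cast at h5
      rwa [show rr * (rr * rr) - 1 = (rr - 1) * (rr * rr + rr + 1) by ring] at h5
    have habel3 : ¬ ((3:ℤ) ^ (k-1)) ∣ (rr - 1) := by push_cast at habel; exact habel
    have hmd3 : ((3:ℤ) ^ (k-1)) ∣ mm * (rr - 1) := by push_cast at hmd; exact hmd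
    obtain ⟨t, ht⟩ := nt3 hk hdvd_r habel3 hmd3
    have hb3 : (aa ^ t * x) ^ 3 = aa ^ (t + rr * t + rr * (rr * t) + mm) := by
      calc (aa ^ t * x) ^ 3 = aa ^ t * (x * aa ^ t) * (x * aa ^ t) * x := by
            rw [pow_succ, pow_two]; simp [mul_assoc]
        _ = aa ^ t * (aa ^ (rr * t) * x) * (aa ^ (rr * t) * x) * x := by rw [hswap t]
        _ = aa ^ t * aa ^ (rr * t) * (x * aa ^ (rr * t)) * (x * x) := by group
        _ = aa ^ t * aa ^ (rr * t) * (aa ^ (rr * (rr * t)) * x) * (x * x) := by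
            rw [hswap (rr * t)]
        _ = aa ^ t * aa ^ (rr * t) * aa ^ (rr * (rr * t)) * x ^ 3 := by
            rw [pow_succ, pow_two]; simp [mul_assoc]
        _ = aa ^ t * aa ^ (rr * t) * aa ^ (rr * (rr * t)) * aa ^ mm := by rw [← hmm]
        _ = _ := by rw [← zpow_add, ← zpow_add, ← zpow_add]
    have hb1 : (aa ^ t * x) ^ 3 = 1 := by
      rw [hb3]
      apply (hdvd1 _).mpr
      push_cast
      rwa [show t + rr * t + rr * (rr * t) + mm = t * (rr * rr + rr + 1) + mm by ring]
    have hbA : aa ^ t * x ∉ A := by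
      intro hb
      apply hx
      have : x = (aa ^ t)⁻¹ * (aa ^ t * x) := by group
      rw [this]
      exact A.mul_mem (A.inv_mem (A.zpow_mem haamem t)) hb
    exact aux_finish hp hAnormal hAmax hAcyc hA_card hbA hb1
end

section
/- Let G be a Frobenius group with Frobenius kernel K. Then (G, K) is a Camina pair: every coset gK with g ∉ K is contained in the conjugacy class of g in G. -/
open MulAction Finset

theorem stmt_9 {G : Type*} [Group G] [Finite G] {α : Type*} [Nonempty α]
    [MulAction G α] (htrans : MulAction.IsPretransitive G α)
    (hfaithful : ∀ g : G, (∀ x : α, g • x = x) → g = 1)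
    (hfrob : ∀ g : G, g ≠ 1 → ∀ x y : α, g • x = x → g • y = y → x = y)
    (K : Subgroup G) (hKnormal : K.Normal)
    (hK : (K : Set G) = {g : G | ∀ x : α, g • x ≠ x} ∪ {1}) :
    ∀ g : G, g ∉ K → ∀ k ∈ K, IsConj g (g * k) := by
  classical
  haveI := htrans
  haveI : Fintype G := Fintype.ofFinite G
  obtain ⟨x₀⟩ := ‹Nonempty α›
  haveI : Finite α := Finite.of_surjective (fun g : G => g • x₀)
    (fun y => htrans.exists_smul_eq x₀ y)
  haveI : Fintype α := Fintype.ofFinite α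
  -- membership facts
  have hmemK : ∀ d : G, d ∈ K → d ≠ 1 → ∀ x : α, d • x ≠ x := by
    intro d hd hd1
    have hd' : d ∈ (K : Set G) := hd
    rw [hK] at hd'
    rcases hd' with h | h
    · exact h
    · exact absurd h hd1
  have hnotK : ∀ d : G, d ∉ K → ∃ x : α, d • x = x := by
    intro d hd
    by_contra h
    push_neg at h
    exact hd (show d ∈ (K : Set G) by rw [hK]; exact Or.inl h)
  -- cardinalities
  set a := Fintype.card α with ha_def
  have ha : 0 < a := Fintype.card_pos
  have sfun : ∀ x : α, (univ.filter (fun g : G => g • x = x)).card * a = Fintype.card G := by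
    intro x
    have h1 : Nat.card (stabilizer G x) = (univ.filter (fun g : G => g • x = x)).card := by
      rw [Nat.card_eq_fintype_card]
      rw [show Fintype.card (stabilizer G x) = Fintype.card {g : G // g • x = x} from
        Fintype.card_congr (Equiv.subtypeEquivRight (fun g => mem_stabilizer_iff))]
      exact Fintype.card_subtype _
    have h2 := (stabilizer G x).card_mul_index
    rw [index_stabilizer_of_transitive, h1] at h2
    simpa [Nat.card_eq_fintype_card, ha_def] using h2
  set s := (univ.filter (fun g : G => g • x₀ = x₀)).card with hs_def
  have hs_all : ∀ x : α, (univ.filter (fun g : G => g • x = x)).card = s := by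
    intro x
    exact Nat.eq_of_mul_eq_mul_right ha ((sfun x).trans (sfun x₀).symm)
  have hs_pos : 0 < s := by
    rw [hs_def]
    exact card_pos.2 ⟨1, by simp⟩
  -- the set of elements with a fixed point, minus 1
  set B : Finset G := univ.biUnion
      (fun x : α => (univ.filter (fun g : G => g • x = x)).erase 1) with hB_def
  have hBcard : B.card = a * (s - 1) := by
    rw [hB_def, card_biUnion]
    · rw [Finset.sum_congr rfl (fun x _ => by
        rw [card_erase_of_mem (by simp), hs_all x])]
      simp [mul_comm, ha_def]
    · intro x _ y _ hxy
      rw [Function.onFun, Finset.disjoint_left]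
      intro g hgx hgy
      rw [mem_erase, mem_filter] at hgx hgy
      exact hxy (hfrob g hgx.1 x y hgx.2.2 hgy.2.2)
  -- K as a finset is the complement of B
  set Kfin : Finset G := univ.filter (fun g => g ∈ K) with hKfin_def
  have hKfin_eq : Kfin = univ \ B := by
    ext g
    simp only [hKfin_def, hB_def, mem_filter, mem_univ, true_and, mem_sdiff,
      mem_biUnion, mem_erase, not_exists, not_and]
    constructor
    · intro hg x h1
      exact hmemK g hg h1 x
    · intro hno
      by_cases h1 : g = 1
      · subst h1; exact K.one_mem
      · show g ∈ (K : Set G)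
        rw [hK]
        left
        intro x
        exact hno x h1
  have hKcard : Kfin.card = a := by
    obtain ⟨t, ht⟩ : ∃ t, s = t + 1 := ⟨s - 1, by omega⟩
    rw [hKfin_eq, card_sdiff_of_subset (subset_univ _), hBcard, card_univ, ← sfun x₀, ← hs_def, ht]
    simp only [Nat.add_sub_cancel]
    rw [show (t + 1) * a = a * t + a by ring]
    exact Nat.add_sub_cancel_left _ _
  -- K acts transitively
  have ktrans : ∀ x y : α, ∃ h ∈ K, h • x = y := by
    intro x y
    have hinj : Set.InjOn (fun k : G => k • x) Kfin := by
      intro k₁ h₁ k₂ h₂ hkk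
      rw [hKfin_def, Finset.coe_filter] at h₁ h₂
      simp only [Set.mem_setOf_eq] at h₁ h₂
      by_contra hne
      have hd : k₂⁻¹ * k₁ ∈ K := K.mul_mem (K.inv_mem h₂.2) h₁.2
      have hd1 : k₂⁻¹ * k₁ ≠ 1 := fun h => hne (inv_mul_eq_one.mp h).symm
      exact hmemK _ hd hd1 x (by
        simp only at hkk
        rw [mul_smul, hkk, inv_smul_smul])
    have himg : (Kfin.image (fun k : G => k • x)) = univ := by
      apply Finset.eq_univ_of_card
      rw [Finset.card_image_of_injOn hinj, hKcard]
    have : y ∈ Kfin.image (fun k : G => k • x) := by rw [himg]; exact mem_univ y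
    obtain ⟨k, hk, hky⟩ := mem_image.mp this
    exact ⟨k, (mem_filter.mp hk).2, hky⟩
  -- main argument
  intro g hg k hk
  obtain ⟨x, hx⟩ := hnotK g hg
  have hgk : g * k ∉ K := by
    intro h
    exact hg (by simpa using K.mul_mem h (K.inv_mem hk))
  obtain ⟨y, hy⟩ := hnotK (g * k) hgk
  obtain ⟨h, hhK, hhxy⟩ := ktrans x y
  have hconjfix : (h * g * h⁻¹) • y = y := by
    rw [← hhxy, mul_smul, mul_smul, inv_smul_smul, hx]
  set d := (h * g * h⁻¹)⁻¹ * (g * k) with hd_def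
  have hdK : d ∈ K := by
    have : d = h * (g⁻¹ * h⁻¹ * g) * k := by
      rw [hd_def]; group
    rw [this]
    exact K.mul_mem (K.mul_mem hhK (by
      have := hKnormal.conj_mem h⁻¹ (K.inv_mem hhK) g⁻¹
      simpa [mul_assoc] using this)) hk
  have hdfix : d • y = y := by
    rw [hd_def, mul_smul, hy, mul_inv_rev, mul_inv_rev, inv_inv]
    have := congrArg (fun z => (h * g * h⁻¹)⁻¹ • z) hconjfix
    simpa [mul_inv_rev, mul_smul] using (inv_smul_eq_iff.mpr hconjfix.symm)
  have hd1 : d = 1 := by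
    by_contra hne
    exact hmemK d hdK hne y hdfix
  have heq : h * g * h⁻¹ = g * k := by
    rw [hd_def] at hd1
    exact inv_mul_eq_one.mp hd1
  exact isConj_iff.mpr ⟨h, heq⟩
end

section
/- Let G = P ⋊ ⟨σ⟩ where P is elementary abelian of order p^k and σ a Singer cycle. Then every conjugacy class of G not contained in P is exactly a single coset of P. -/
theorem stmt_16 {p k : ℕ} (hp : p.Prime) (hk : 2 ≤ k)
    {P : Type*} [CommGroup P] [Fintype P] (hcard : Fintype.card P = p ^ k)
    (helem : ∀ x : P, x ^ p = 1) (σ : MulAut P)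
    (htrans : ∀ x y : P, x ≠ 1 → y ≠ 1 → ∃ m : ℤ, (σ ^ m) x = y) :
    ∀ g : P ⋊[(Subgroup.zpowers σ).subtype] (Subgroup.zpowers σ), g.right ≠ 1 →
      {h : P ⋊[(Subgroup.zpowers σ).subtype] (Subgroup.zpowers σ) | IsConj g h} =
        {h | h.right = g.right} := by
  intro g hg
  ext h
  simp only [Set.mem_setOf_eq]
  constructor
  · intro hc
    obtain ⟨c, hc⟩ := isConj_iff.mp hc
    have : h.right = c.right * g.right * c.right⁻¹ := by
      rw [← hc]; simp [SemidirectProduct.mul_right, SemidirectProduct.inv_right]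
    have hcomm : c.right * g.right = g.right * c.right := by
      obtain ⟨a, ha⟩ := Subgroup.mem_zpowers_iff.mp c.right.2
      obtain ⟨b, hb⟩ := Subgroup.mem_zpowers_iff.mp g.right.2
      apply Subtype.ext
      rw [Subgroup.coe_mul, Subgroup.coe_mul, ← ha, ← hb]
      exact Commute.zpow_zpow_self σ a b
    rw [this, hcomm, mul_assoc, mul_inv_cancel, mul_one]
  · intro hh
    set τ : MulAut P := (Subgroup.zpowers σ).subtype g.right with hτdef
    have hτ1 : τ ≠ 1 := by
      intro h1
      exact hg (Subtype.ext h1)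
    have hker : ∀ x : P, τ x = x → x = 1 := by
      intro x hx
      by_contra hx1
      apply hτ1
      ext y
      rcases eq_or_ne y 1 with rfl | hy
      · simp
      · obtain ⟨m, hm⟩ := htrans x y hx1 hy
        obtain ⟨n, hn⟩ := g.right.2
        have hτσ : τ = σ ^ n := by rw [hτdef]; exact hn.symm
        subst hm
        rw [hτσ, ← MulAut.mul_apply, ← zpow_add, add_comm, zpow_add, MulAut.mul_apply,
          ← hτσ, hx]
        simp
    let f : P →* P :=
      { toFun := fun x => x * (τ x)⁻¹
        map_one' := by simp
        map_mul' := by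
          intro x y
          simp [mul_comm, mul_left_comm, mul_assoc] }
    have finj : Function.Injective f := by
      rw [injective_iff_map_eq_one]
      intro x hx
      apply hker
      have : x * (τ x)⁻¹ = 1 := hx
      rw [mul_inv_eq_one] at this
      exact this.symm
    have fsurj : Function.Surjective f := Finite.injective_iff_surjective.mp finj
    obtain ⟨x, hx⟩ := fsurj (h.left * g.left⁻¹)
    rw [isConj_iff]
    refine ⟨SemidirectProduct.inl x, ?_⟩
    ext
    · have hx' : x * (τ x)⁻¹ = h.left * g.left⁻¹ := hx
      simp only [SemidirectProduct.mul_left, SemidirectProduct.mul_right,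
        SemidirectProduct.inv_left, SemidirectProduct.inv_right,
        SemidirectProduct.left_inl, SemidirectProduct.right_inl]
      simp only [one_mul, mul_one, inv_one, map_one, map_inv, MulAut.one_apply]
      rw [← hτdef, mul_right_comm, hx', inv_mul_cancel_right]
    · simp [hh]
end
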